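/- Let K be a field and M an n×n unimodular matrix with nonnegative integer entries and columns m^{(1)},…,m^{(n)}. Let g_1,…,g_r ∈ K[x_1,…,x_n] be nonzero polynomials such that, for each i, In_u g_i is the same polynomial for all u = Mλ with λ ∈ (ℝ_{>0})^n, and write g_i∘φ_{M^t} = x^{P_i}·h_i with P_i ∈ ℕ^n and h_i(0) ≠ 0. Fix s ∈ {1,…,n} and a vector w = λ_1 m^{(1)} + ⋯ + λ_s m^{(s)} with all λ_i > 0. If there exists y ∈ (K^*)^n with (In_w g_i)(y) = 0 for all i, then there exist z_{s+1},…,z_n ∈ K∖{0} such that h_i(0,…,0,z_{s+1},…,z_n) = 0 for every i ∈ {1,…,r}; in particular the common zero set of h_1,…,h_r meets the set {x_1 = ⋯ = x_s = 0, x_{s+1}⋯x_n ≠ 0}. -/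
import Mathlib


open MvPolynomial Matrix

open Classical in
/-- The `w`-initial part of a multivariate polynomial: the sum of the terms whose
exponents have minimal `w`-weight among the exponents of `f`. -/
noncomputable def initialPart {n : ℕ} {K : Type*} [CommSemiring K] (w : Fin n → ℝ)
    (f : MvPolynomial (Fin n) K) : MvPolynomial (Fin n) K :=
  ∑ μ ∈ f.support,
    if ∀ ν ∈ f.support, ∑ i, w i * (μ i : ℝ) ≤ ∑ i, w i * (ν i : ℝ)
    then monomial μ (f.coeff μ) else 0

/-- The monomial substitution `φ_M` on polynomials: `x_i ↦ ∏_j x_j ^ (M j i)`,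
so that `x^μ ↦ x^(Mμ)`. -/
noncomputable def monomialSubst {n : ℕ} {K : Type*} [CommSemiring K]
    (M : Matrix (Fin n) (Fin n) ℕ) (f : MvPolynomial (Fin n) K) : MvPolynomial (Fin n) K :=
  aeval (fun i => ∏ j, (X j : MvPolynomial (Fin n) K) ^ M j i) f

/-- A nonnegative integer square matrix is unimodular if its determinant (over `ℤ`) is `±1`. -/
def IsUnimodular {n : ℕ} (M : Matrix (Fin n) (Fin n) ℕ) : Prop :=
  (M.map fun a => (a : ℤ)).det = 1 ∨ (M.map fun a => (a : ℤ)).det = -1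

section Aux14

noncomputable def wt {n : ℕ} (w : Fin n → ℝ) (μ : Fin n →₀ ℕ) : ℝ := ∑ i, w i * (μ i : ℝ)

open Classical in
lemma initialPart_def' {n : ℕ} {K : Type*} [CommSemiring K] (w : Fin n → ℝ)
    (f : MvPolynomial (Fin n) K) :
    initialPart w f = ∑ μ ∈ f.support,
      if ∀ ν ∈ f.support, wt w μ ≤ wt w ν then monomial μ (f.coeff μ) else 0 := rfl

open Classical in
lemma initialPart_mapped {n : ℕ} {K : Type*} [CommSemiring K] (w' w : Fin n → ℝ)
    (T : (Fin n →₀ ℕ) → (Fin n →₀ ℕ)) (hT : Function.Injective T)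
    (hw : ∀ μ μ' : Fin n →₀ ℕ, (wt w' (T μ) ≤ wt w' (T μ') ↔ wt w μ ≤ wt w μ'))
    (f : MvPolynomial (Fin n) K) :
    initialPart w' (∑ μ ∈ f.support, monomial (T μ) (f.coeff μ)) =
      ∑ μ ∈ f.support, if ∀ ν ∈ f.support, wt w μ ≤ wt w ν
        then monomial (T μ) (f.coeff μ) else 0 := by
  set F : MvPolynomial (Fin n) K := ∑ μ ∈ f.support, monomial (T μ) (f.coeff μ) with hF
  have hco : ∀ μ, F.coeff (T μ) = if μ ∈ f.support then f.coeff μ else 0 := by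
    intro μ
    rw [hF, coeff_sum]
    have : ∀ μ' ∈ f.support, coeff (T μ) (monomial (T μ') (f.coeff μ')) =
        if μ' = μ then f.coeff μ' else 0 := by
      intro μ' _
      rw [coeff_monomial]
      simp [hT.eq_iff]
    rw [Finset.sum_congr rfl this, Finset.sum_ite_eq' f.support μ (fun μ' => f.coeff μ')]
  have hsupp : F.support = f.support.image T := by
    apply Finset.Subset.antisymm
    · intro ν hν
      rw [mem_support_iff] at hν
      by_contra hc
      apply hν
      rw [hF, coeff_sum]
      refine Finset.sum_eq_zero fun μ' hμ' => ?_
      rw [coeff_monomial, if_neg]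
      intro he
      exact hc (Finset.mem_image.mpr ⟨μ', hμ', he⟩)
    · intro ν hν
      obtain ⟨μ, hμ, rfl⟩ := Finset.mem_image.mp hν
      rw [mem_support_iff, hco, if_pos hμ]
      exact mem_support_iff.mp hμ
  rw [initialPart_def', hsupp]
  rw [Finset.sum_image (by intro a _ b _ hab; exact hT hab)]
  refine Finset.sum_congr rfl fun μ hμ => ?_
  have hcond : (∀ ν ∈ f.support.image T, wt w' (T μ) ≤ wt w' ν) ↔
      (∀ ν ∈ f.support, wt w μ ≤ wt w ν) := by
    constructor
    · intro hc ν hν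
      exact (hw μ ν).mp (hc (T ν) (Finset.mem_image_of_mem T hν))
    · rintro hc ν hν
      rw [Finset.mem_image] at hν
      obtain ⟨μ', hμ', rfl⟩ := hν
      exact (hw μ μ').mpr (hc μ' hμ')
  rw [hco, if_pos hμ]
  exact if_congr hcond rfl rfl

variable {n : ℕ} {K : Type*} [CommSemiring K]

/-- Exponent map `μ ↦ μᵀ M` induced by `φ_{Mᵀ}`. -/
noncomputable def expMap (M : Matrix (Fin n) (Fin n) ℕ) (μ : Fin n →₀ ℕ) : Fin n →₀ ℕ :=
  Finsupp.equivFunOnFinite.symm (fun j => ∑ i, M i j * μ i)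

lemma expMap_apply (M : Matrix (Fin n) (Fin n) ℕ) (μ : Fin n →₀ ℕ) (j : Fin n) :
    expMap M μ j = ∑ i, M i j * μ i := rfl

lemma expMap_injective (M : Matrix (Fin n) (Fin n) ℕ) (hM : IsUnimodular M) :
    Function.Injective (expMap M) := by
  set Mz : Matrix (Fin n) (Fin n) ℤ := M.map (fun a : ℕ => (a : ℤ)) with hMz
  have hdet : IsUnit Mz.det := by
    rcases hM with hd | hd
    · rw [hMz, hd]; exact isUnit_one
    · rw [hMz, hd]; exact isUnit_one.neg
  intro μ μ' hμ
  have hfun : ∀ j : Fin n, ∑ i, (M i j : ℤ) * (μ i : ℤ) = ∑ i, (M i j : ℤ) * (μ' i : ℤ) := by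
    intro j
    have h1 : ((expMap M μ j : ℕ) : ℤ) = ((expMap M μ' j : ℕ) : ℤ) := by rw [hμ]
    rw [expMap_apply, expMap_apply] at h1
    push_cast at h1
    exact h1
  have hvec : Matrix.vecMul (fun i => (μ i : ℤ)) Mz = Matrix.vecMul (fun i => (μ' i : ℤ)) Mz := by
    funext j
    simpa [Matrix.vecMul, dotProduct, hMz, Matrix.map_apply, mul_comm] using hfun j
  have h2 : (fun i => (μ i : ℤ)) = fun i => (μ' i : ℤ) := by
    have h1 := congrArg (fun v => Matrix.vecMul v Mz⁻¹) hvec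
    simpa [Matrix.vecMul_vecMul, Matrix.mul_nonsing_inv Mz hdet, Matrix.vecMul_one] using h1
  ext i
  exact Nat.cast_injective (congrFun h2 i)

lemma wt_expMap (M : Matrix (Fin n) (Fin n) ℕ) (lam : Fin n → ℝ) (μ : Fin n →₀ ℕ) :
    wt lam (expMap M μ) = wt ((M.map ((↑) : ℕ → ℝ)).mulVec lam) μ := by
  unfold wt
  simp only [expMap_apply, Matrix.mulVec, dotProduct, Matrix.map_apply]
  push_cast
  simp only [Finset.mul_sum, Finset.sum_mul]
  rw [Finset.sum_comm]
  exact Finset.sum_congr rfl fun i _ => Finset.sum_congr rfl fun j _ => by ring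

lemma monomialSubst_monomial (M : Matrix (Fin n) (Fin n) ℕ) (μ : Fin n →₀ ℕ) (c : K) :
    monomialSubst Mᵀ (monomial μ c) = monomial (expMap M μ) c := by
  unfold monomialSubst
  rw [aeval_monomial, monomial_eq]
  congr 1
  rw [Finsupp.prod_fintype _ _ (fun i => pow_zero _), Finsupp.prod_fintype _ _ (fun i => pow_zero _)]
  simp only [← Finset.prod_pow, ← pow_mul, Matrix.transpose_apply]
  rw [Finset.prod_comm]
  exact Finset.prod_congr rfl fun j _ => by
    rw [Finset.prod_pow_eq_pow_sum, expMap_apply]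

lemma monomialSubst_eq_sum (M : Matrix (Fin n) (Fin n) ℕ) (f : MvPolynomial (Fin n) K) :
    monomialSubst Mᵀ f = ∑ μ ∈ f.support, monomial (expMap M μ) (f.coeff μ) := by
  conv_lhs => rw [f.as_sum]
  unfold monomialSubst
  rw [map_sum]
  exact Finset.sum_congr rfl fun μ _ => monomialSubst_monomial M μ (f.coeff μ)

open Classical in
lemma monomialSubst_initialPart (M : Matrix (Fin n) (Fin n) ℕ) (hM : IsUnimodular M)
    (lam : Fin n → ℝ) (f : MvPolynomial (Fin n) K) :
    monomialSubst Mᵀ (initialPart ((M.map ((↑) : ℕ → ℝ)).mulVec lam) f) =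
      initialPart lam (monomialSubst Mᵀ f) := by
  rw [monomialSubst_eq_sum M f,
    initialPart_mapped lam ((M.map ((↑) : ℕ → ℝ)).mulVec lam) (expMap M)
      (expMap_injective M hM) (fun μ μ' => by rw [wt_expMap, wt_expMap]) f]
  rw [initialPart_def']
  unfold monomialSubst
  rw [map_sum]
  refine Finset.sum_congr rfl fun μ _ => ?_
  rw [apply_ite (aeval fun i => ∏ j, (X j : MvPolynomial (Fin n) K) ^ Mᵀ j i), map_zero]
  congr 1
  exact monomialSubst_monomial M μ (f.coeff μ)

open Classical in
lemma initialPart_monomial_mul (lam : Fin n → ℝ) (P : Fin n →₀ ℕ)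
    (h : MvPolynomial (Fin n) K) :
    initialPart lam (monomial P 1 * h) = monomial P 1 * initialPart lam h := by
  have hsum : monomial P (1 : K) * h = ∑ τ ∈ h.support, monomial (P + τ) (h.coeff τ) := by
    conv_lhs => rw [h.as_sum]
    rw [Finset.mul_sum]
    exact Finset.sum_congr rfl fun τ _ => by rw [monomial_mul, one_mul]
  have hwadd : ∀ τ : Fin n →₀ ℕ, wt lam (P + τ) = wt lam P + wt lam τ := by
    intro τ
    unfold wt
    rw [← Finset.sum_add_distrib]
    refine Finset.sum_congr rfl fun i _ => ?_
    rw [Finsupp.add_apply]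
    push_cast
    ring
  rw [hsum, initialPart_mapped lam lam (fun τ => P + τ) (add_right_injective P)
    (fun τ τ' => by rw [hwadd, hwadd, add_le_add_iff_left]) h]
  rw [initialPart_def', Finset.mul_sum]
  refine Finset.sum_congr rfl fun τ _ => ?_
  rw [mul_ite, mul_zero, monomial_mul, one_mul]

lemma eval_monomialSubst (M : Matrix (Fin n) (Fin n) ℕ) (p : Fin n → K)
    (f : MvPolynomial (Fin n) K) :
    eval p (monomialSubst M f) = eval (fun i => ∏ j, p j ^ M j i) f := by
  have hae : ∀ (v : Fin n → K) (q : MvPolynomial (Fin n) K), aeval v q = eval v q := by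
    intro v q
    rw [← coe_aeval_eq_eval]
    rfl
  unfold monomialSubst
  rw [← hae p,
    comp_aeval_apply (f := fun i => ∏ j, (X j : MvPolynomial (Fin n) K) ^ M j i) (aeval p) f,
    hae]
  have harg : (fun i => aeval p (∏ j, (X j : MvPolynomial (Fin n) K) ^ M j i))
      = fun i => ∏ j, p j ^ M j i := by
    funext i
    rw [map_prod]
    exact Finset.prod_congr rfl fun j _ => by rw [map_pow, aeval_X]
  rw [harg]

lemma prod_zpow_eq_zpow_sum {G : Type*} [CommGroup G] {ι : Type*} (s : Finset ι)
    (f : ι → ℤ) (a : G) : ∏ i ∈ s, a ^ f i = a ^ (∑ i ∈ s, f i) := by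
  induction s using Finset.cons_induction with
  | empty => simp
  | cons i s hi ih => rw [Finset.prod_cons, Finset.sum_cons, ih, _root_.zpow_add]

lemma exists_torus_preimage {K : Type*} [Field K] (M : Matrix (Fin n) (Fin n) ℕ)
    (hM : IsUnimodular M) (y : Fin n → K) (hy : ∀ j, y j ≠ 0) :
    ∃ p : Fin n → K, (∀ j, p j ≠ 0) ∧ ∀ i, ∏ j, p j ^ M i j = y i := by
  set Mz : Matrix (Fin n) (Fin n) ℤ := M.map (fun a : ℕ => (a : ℤ)) with hMz
  have hdet : IsUnit Mz.det := by
    rcases hM with hd | hd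
    · rw [hMz, hd]; exact isUnit_one
    · rw [hMz, hd]; exact isUnit_one.neg
  set N := Mz⁻¹ with hN
  have hMN : Mz * N = 1 := Matrix.mul_nonsing_inv Mz hdet
  set yu : Fin n → Kˣ := fun i => Units.mk0 (y i) (hy i) with hyu
  set pu : Fin n → Kˣ := fun j => ∏ k, yu k ^ N j k with hpu
  have hp : ∀ i, ∏ j, pu j ^ M i j = yu i := by
    intro i
    have h0 : ∏ j, pu j ^ M i j = ∏ j, (∏ k, yu k ^ N j k) ^ ((M i j : ℤ)) := by
      refine Finset.prod_congr rfl fun j _ => ?_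
      rw [show pu j = ∏ k, yu k ^ N j k from rfl, zpow_natCast]
    rw [h0]
    calc ∏ j, (∏ k, yu k ^ N j k) ^ ((M i j : ℤ))
        = ∏ j, ∏ k, yu k ^ (N j k * (M i j : ℤ)) := by
          refine Finset.prod_congr rfl fun j _ => ?_
          rw [← Finset.prod_zpow]
          exact Finset.prod_congr rfl fun k _ => (_root_.zpow_mul _ _ _).symm
      _ = ∏ k, yu k ^ (∑ j, N j k * (M i j : ℤ)) := by
          rw [Finset.prod_comm]
          exact Finset.prod_congr rfl fun k _ => prod_zpow_eq_zpow_sum _ _ _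
      _ = yu i := by
          have hone : ∀ k, (∑ j, N j k * (M i j : ℤ)) = if i = k then 1 else 0 := by
            intro k
            have h2 : (Mz * N) i k = ∑ j, (M i j : ℤ) * N j k := by
              rw [Matrix.mul_apply]
              exact Finset.sum_congr rfl fun j _ => by rw [hMz]; rfl
            calc ∑ j, N j k * (M i j : ℤ)
                = ∑ j, (M i j : ℤ) * N j k := Finset.sum_congr rfl fun j _ => mul_comm _ _
              _ = (Mz * N) i k := h2.symm
              _ = (1 : Matrix (Fin n) (Fin n) ℤ) i k := by rw [hMN]
              _ = if i = k then 1 else 0 := Matrix.one_apply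
          have hsplit : ∀ k, yu k ^ (if i = k then (1 : ℤ) else 0) = if i = k then yu k else 1 := by
            intro k
            split <;> simp
          simp only [hone, hsplit]
          simp
  refine ⟨fun j => ((pu j : Kˣ) : K), fun j => Units.ne_zero _, fun i => ?_⟩
  calc ∏ j, ((pu j : Kˣ) : K) ^ M i j
      = ((∏ j, pu j ^ M i j : Kˣ) : K) := by push_cast; rfl
    _ = y i := by rw [hp i, hyu]; simp

end Aux14

/-- Let `M` be a nonnegative unimodular matrix whose column cone is good for
each of the nonzero polynomials `g_1, …, g_r`, and write `g_i ∘ φ_{Mᵀ} = x^{P_i} · h_i`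
with `h_i(0) ≠ 0`.  Let `w = λ_1 m^{(1)} + ⋯ + λ_s m^{(s)}` be a positive combination of
the first `s` columns of `M`.  If the initial parts `In_w g_i` have a common zero in the
torus `(K^*)^n`, then the common zero set of `h_1, …, h_r` meets the set
`{x_1 = ⋯ = x_s = 0, x_{s+1} ⋯ x_n ≠ 0}`. -/
theorem torus_zero_of_initials_gives_orbit_point {n r : ℕ} {K : Type*} [Field K]
    (M : Matrix (Fin n) (Fin n) ℕ) (hM : IsUnimodular M)
    (g : Fin r → MvPolynomial (Fin n) K) (hg : ∀ i, g i ≠ 0)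
    (hgood : ∀ i, ∀ lam lam' : Fin n → ℝ, (∀ j, 0 < lam j) → (∀ j, 0 < lam' j) →
      initialPart ((M.map ((↑) : ℕ → ℝ)).mulVec lam) (g i) =
        initialPart ((M.map ((↑) : ℕ → ℝ)).mulVec lam') (g i))
    (P : Fin r → (Fin n →₀ ℕ)) (h : Fin r → MvPolynomial (Fin n) K)
    (hfac : ∀ i, monomialSubst Mᵀ (g i) = monomial (P i) 1 * h i)
    (hh0 : ∀ i, eval (0 : Fin n → K) (h i) ≠ 0)
    (s : ℕ) (hs1 : 1 ≤ s) (hsn : s ≤ n)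
    (lam : Fin n → ℝ) (hlam : ∀ i : Fin n, ((i : ℕ) < s → 0 < lam i) ∧ (s ≤ (i : ℕ) → lam i = 0))
    (y : Fin n → K) (hy : ∀ j, y j ≠ 0)
    (hyz : ∀ i, eval y (initialPart ((M.map ((↑) : ℕ → ℝ)).mulVec lam) (g i)) = 0) :
    ∃ z : Fin n → K, (∀ j : Fin n, (j : ℕ) < s → z j = 0) ∧
      (∀ j : Fin n, s ≤ (j : ℕ) → z j ≠ 0) ∧ ∀ i, eval z (h i) = 0 := by
  classical
  obtain ⟨p, hp0, hpy⟩ := exists_torus_preimage M hM y hy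
  set z : Fin n → K := fun j => if (j : ℕ) < s then 0 else p j with hzdef
  have hlam0 : ∀ j, 0 ≤ lam j := by
    intro j
    rcases lt_or_ge (j : ℕ) s with hj | hj
    · exact le_of_lt ((hlam j).1 hj)
    · exact le_of_eq ((hlam j).2 hj).symm
  have wtnn : ∀ τ : Fin n →₀ ℕ, 0 ≤ wt lam τ := fun τ =>
    Finset.sum_nonneg fun j _ => mul_nonneg (hlam0 j) (Nat.cast_nonneg _)
  have wt0 : wt lam (0 : Fin n →₀ ℕ) = 0 := by simp [wt]
  have wtz : ∀ τ : Fin n →₀ ℕ, (∀ j : Fin n, (j : ℕ) < s → τ j = 0) → wt lam τ = 0 := by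
    intro τ hτ
    refine Finset.sum_eq_zero fun j _ => ?_
    rcases lt_or_ge (j : ℕ) s with hj | hj
    · rw [hτ j hj]; simp
    · rw [(hlam j).2 hj, zero_mul]
  refine ⟨z, fun j hj => by simp [hzdef, hj], fun j hj => ?_, fun i => ?_⟩
  · have hns : ¬ ((j : ℕ) < s) := not_lt.mpr hj
    simp only [hzdef, if_neg hns]
    exact hp0 j
  · set w : Fin n → ℝ := (M.map ((↑) : ℕ → ℝ)).mulVec lam with hwdef
    have h0mem : (0 : Fin n →₀ ℕ) ∈ (h i).support := by
      rw [mem_support_iff]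
      intro hc
      apply hh0 i
      rw [eval_zero, constantCoeff_eq]
      exact hc
    have Ciff : ∀ τ : Fin n →₀ ℕ, (∀ ν ∈ (h i).support, wt lam τ ≤ wt lam ν) ↔
        (∀ j : Fin n, (j : ℕ) < s → τ j = 0) := by
      intro τ
      constructor
      · intro hC
        have h1 : wt lam τ ≤ 0 := wt0 ▸ hC 0 h0mem
        have h2 : wt lam τ = 0 := le_antisymm h1 (wtnn τ)
        intro j hj
        have h3 := (Finset.sum_eq_zero_iff_of_nonneg
          (fun k _ => mul_nonneg (hlam0 k) (Nat.cast_nonneg _))).mp h2 j (Finset.mem_univ j)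
        have h4 : (τ j : ℝ) = 0 := by
          rcases mul_eq_zero.mp h3 with hl | ht
          · exact absurd hl (ne_of_gt ((hlam j).1 hj))
          · exact ht
        exact_mod_cast h4
      · intro hz0 ν hν
        rw [wtz τ hz0]
        exact wtnn ν
    have hkey : monomialSubst Mᵀ (initialPart w (g i)) =
        monomial (P i) 1 * initialPart lam (h i) := by
      rw [hwdef, monomialSubst_initialPart M hM lam (g i), hfac i,
        initialPart_monomial_mul lam (P i) (h i)]
    have h2 : eval p (monomialSubst Mᵀ (initialPart w (g i))) = 0 := by
      rw [eval_monomialSubst]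
      have hfy : (fun i' => ∏ j, p j ^ Mᵀ j i') = y := by
        funext i'
        simpa [Matrix.transpose_apply] using hpy i'
      rw [hfy]
      exact hyz i
    have hpP : eval p (monomial (P i) (1 : K)) ≠ 0 := by
      rw [eval_monomial, one_mul]
      exact Finset.prod_ne_zero_iff.mpr fun j _ => pow_ne_zero _ (hp0 j)
    have h3 : eval p (initialPart lam (h i)) = 0 := by
      have h4 := h2
      rw [hkey, _root_.map_mul] at h4
      exact (mul_eq_zero.mp h4).resolve_left hpP
    have h5 : eval z (h i) = eval p (initialPart lam (h i)) := by
      rw [eval_eq z (h i), initialPart_def', map_sum]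
      refine Finset.sum_congr rfl fun τ hτ => ?_
      rw [apply_ite (eval p), map_zero, eval_monomial]
      by_cases hC : ∀ ν ∈ (h i).support, wt lam τ ≤ wt lam ν
      · rw [if_pos hC]
        have hz0 := (Ciff τ).mp hC
        congr 1
        refine Finset.prod_congr rfl fun j hj => ?_
        have hns : ¬ ((j : ℕ) < s) := fun hlt => (Finsupp.mem_support_iff.mp hj) (hz0 j hlt)
        rw [hzdef]
        simp [hns]
      · rw [if_neg hC]
        have hex : ∃ j : Fin n, (j : ℕ) < s ∧ τ j ≠ 0 := by
          by_contra hno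
          push_neg at hno
          exact hC ((Ciff τ).mpr hno)
        obtain ⟨j, hjs, hjτ⟩ := hex
        have hjmem : j ∈ τ.support := Finsupp.mem_support_iff.mpr hjτ
        rw [Finset.prod_eq_zero hjmem, mul_zero]
        rw [hzdef]
        simp [hjs, zero_pow hjτ]
    rw [h5]
    exact h3
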